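/- Perturbation claim: for any f : D → ℝ there exists f' : D → ℝ such that f and f' have exactly the same set of violated pairs (pairs with positive weight), the distance to the (α,β)-Lipschitz property is the same for f and f', and w_{f'}(x,y) ≠ 0 for all distinct x,y ∈ D. -/

import Mathlib

noncomputable def fd {n k : ℕ} (α β : ℝ) (x y : Fin n → Fin k) : ℝ :=
  β * ∑ i, (((x i : ℕ) : ℝ) - ((min (x i) (y i) : Fin k) : ℕ)) -
  α * ∑ i, (((y i : ℕ) : ℝ) - ((min (x i) (y i) : Fin k) : ℕ))

noncomputable def phiF (α β : ℝ) (t : ℝ) : ℝ := if 0 ≤ t then β * t else α * t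

lemma phiF_zero (α β : ℝ) : phiF α β 0 = 0 := by simp [phiF]

lemma phiF_add_le (α β : ℝ) (hαβ : α ≤ β) (s t : ℝ) :
    phiF α β (s + t) ≤ phiF α β s + phiF α β t := by
  unfold phiF; split_ifs <;> nlinarith

lemma fd_eq_sum {n k : ℕ} (α β : ℝ) (x y : Fin n → Fin k) :
    fd α β x y = ∑ i, phiF α β (((x i : ℕ) : ℝ) - ((y i : ℕ) : ℝ)) := by
  unfold fd
  rw [Finset.mul_sum, Finset.mul_sum, ← Finset.sum_sub_distrib]
  refine Finset.sum_congr rfl fun i _ => ?_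
  rcases le_total (x i) (y i) with h | h
  · have h' : (x i : ℕ) ≤ (y i : ℕ) := h
    rw [min_eq_left h]
    unfold phiF
    rcases eq_or_lt_of_le h' with h'' | h''
    · simp [h'']
    · have : ((x i : ℕ) : ℝ) < ((y i : ℕ) : ℝ) := by exact_mod_cast h''
      rw [if_neg (by linarith)]
      ring
  · have h' : (y i : ℕ) ≤ (x i : ℕ) := h
    rw [min_eq_right h]
    unfold phiF
    have : ((y i : ℕ) : ℝ) ≤ ((x i : ℕ) : ℝ) := by exact_mod_cast h'
    rw [if_pos (by linarith)]
    ring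

lemma fd_self {n k : ℕ} (α β : ℝ) (x : Fin n → Fin k) : fd α β x x = 0 := by
  simp [fd_eq_sum, phiF_zero]

lemma fd_triangle {n k : ℕ} (α β : ℝ) (hαβ : α ≤ β) (x y z : Fin n → Fin k) :
    fd α β x z ≤ fd α β x y + fd α β y z := by
  rw [fd_eq_sum, fd_eq_sum, fd_eq_sum, ← Finset.sum_add_distrib]
  refine Finset.sum_le_sum fun i _ => ?_
  have := phiF_add_le α β hαβ (((x i : ℕ) : ℝ) - ((y i : ℕ) : ℝ))
    (((y i : ℕ) : ℝ) - ((z i : ℕ) : ℝ))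
  simpa using this

lemma fd_add_pos {n k : ℕ} {α β : ℝ} (hαβ : α < β) {x y : Fin n → Fin k}
    (hxy : x ≠ y) : 0 < fd α β x y + fd α β y x := by
  rw [fd_eq_sum, fd_eq_sum, ← Finset.sum_add_distrib]
  obtain ⟨i, hi⟩ : ∃ i, x i ≠ y i := by
    by_contra h; push_neg at h; exact hxy (funext h)
  have hterm : ∀ j, (0:ℝ) ≤ phiF α β (((x j : ℕ) : ℝ) - ((y j : ℕ) : ℝ)) +
      phiF α β (((y j : ℕ) : ℝ) - ((x j : ℕ) : ℝ)) := by
    intro j; unfold phiF; split_ifs <;> nlinarith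
  have hipos : (0:ℝ) < phiF α β (((x i : ℕ) : ℝ) - ((y i : ℕ) : ℝ)) +
      phiF α β (((y i : ℕ) : ℝ) - ((x i : ℕ) : ℝ)) := by
    have : ((x i : ℕ) : ℝ) ≠ ((y i : ℕ) : ℝ) := by
      simp only [ne_eq, Nat.cast_inj]
      exact fun h => hi (Fin.ext h)
    unfold phiF; split_ifs <;> rcases lt_or_gt_of_ne this <;> nlinarith
  calc (0:ℝ) < _ := hipos
    _ ≤ _ := Finset.single_le_sum (fun j _ => hterm j) (Finset.mem_univ i)
def IsABLip {n k : ℕ} (α β : ℝ) (g : (Fin n → Fin k) → ℝ) : Prop :=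
  ∀ x y : Fin n → Fin k,
    (∃ i, (y i : ℕ) = (x i : ℕ) + 1 ∧ ∀ j, j ≠ i → y j = x j) →
      α ≤ g y - g x ∧ g y - g x ≤ β

lemma fd_step {n k : ℕ} (α β : ℝ) {x y : Fin n → Fin k}
    (h : ∃ i, (y i : ℕ) = (x i : ℕ) + 1 ∧ ∀ j, j ≠ i → y j = x j) :
    fd α β x y = -α ∧ fd α β y x = β := by
  obtain ⟨i, hi, hj⟩ := h
  constructor
  · rw [fd_eq_sum]
    rw [Fintype.sum_eq_single i (fun j hjne => by rw [hj j hjne]; simp [phiF])]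
    rw [hi]
    have : ((x i : ℕ) : ℝ) - (((x i : ℕ) + 1 : ℕ) : ℝ) = -1 := by push_cast; ring
    rw [this]
    unfold phiF
    rw [if_neg (by norm_num)]
    ring
  · rw [fd_eq_sum]
    rw [Fintype.sum_eq_single i (fun j hjne => by rw [hj j hjne]; simp [phiF])]
    rw [hi]
    have : (((x i : ℕ) + 1 : ℕ) : ℝ) - ((x i : ℕ) : ℝ) = 1 := by push_cast; ring
    rw [this]
    unfold phiF
    rw [if_pos (by norm_num)]
    ring

lemma base_lip {n k : ℕ} {α β : ℝ} (hαβ : α ≤ β) :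
    IsABLip α β (fun x : Fin n → Fin k => β * ∑ i, ((x i : ℕ) : ℝ)) := by
  intro x y ⟨i, hi, hj⟩
  have hsum : ∑ j, ((y j : ℕ) : ℝ) = (∑ j, ((x j : ℕ) : ℝ)) + 1 := by
    rw [← Finset.sum_erase_add _ _ (Finset.mem_univ i),
        ← Finset.sum_erase_add _ _ (Finset.mem_univ i)]
    have h1 : ∑ j ∈ Finset.univ.erase i, ((y j : ℕ) : ℝ) =
        ∑ j ∈ Finset.univ.erase i, ((x j : ℕ) : ℝ) :=
      Finset.sum_congr rfl fun j hjm => by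
        rw [hj j (Finset.ne_of_mem_erase hjm)]
    rw [h1, hi]; push_cast; ring
  simp only
  rw [hsum]
  constructor <;> nlinarith

lemma lip_global {n k : ℕ} {α β : ℝ} {g : (Fin n → Fin k) → ℝ}
    (hg : IsABLip α β g) : ∀ x y, g x - g y ≤ fd α β x y := by
  suffices H : ∀ N : ℕ, ∀ x y : Fin n → Fin k,
      (∑ i, ((x i : ℕ) - (y i : ℕ) + ((y i : ℕ) - (x i : ℕ)))) ≤ N →
      g x - g y ≤ fd α β x y by
    exact fun x y => H _ x y le_rfl
  intro N
  induction N with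
  | zero =>
    intro x y h
    have hxy : x = y := by
      funext i
      have h2 := Finset.single_le_sum
        (f := fun i => ((x i : ℕ) - (y i : ℕ) + ((y i : ℕ) - (x i : ℕ))))
        (fun j _ => Nat.zero_le _) (Finset.mem_univ i)
      exact Fin.ext (by omega)
    subst hxy
    rw [fd_self]; simp
  | succ N ih =>
    intro x y h
    by_cases hxy : x = y
    · subst hxy; rw [fd_self]; simp
    obtain ⟨i, hi⟩ : ∃ i, x i ≠ y i := by
      by_contra hc; push_neg at hc; exact hxy (funext hc)
    have hine : (x i : ℕ) ≠ (y i : ℕ) := fun hc => hi (Fin.ext hc)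
    rcases Nat.lt_or_ge (y i : ℕ) (x i : ℕ) with hlt | hge
    · -- x i > y i : step down x
      have h1 : 1 ≤ (x i : ℕ) := by omega
      set x' : Fin n → Fin k := Function.update x i
        ⟨(x i : ℕ) - 1, lt_of_le_of_lt (Nat.sub_le _ _) (x i).isLt⟩ with hx'
      have hx'i : (x' i : ℕ) = (x i : ℕ) - 1 := by simp [hx']
      have hx'j : ∀ j, j ≠ i → x' j = x j := fun j hjne => by
        simp [hx', Function.update_of_ne hjne]
      have hstep : ∃ l, (x l : ℕ) = (x' l : ℕ) + 1 ∧ ∀ j, j ≠ l → x j = x' j :=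
        ⟨i, by omega, fun j hjne => (hx'j j hjne).symm⟩
      have hlip := hg x' x hstep
      have hsum' : (∑ j, ((x' j : ℕ) - (y j : ℕ) + ((y j : ℕ) - (x' j : ℕ)))) ≤ N := by
        have hx : ∑ j, ((x j : ℕ) - (y j : ℕ) + ((y j : ℕ) - (x j : ℕ)))
            = ((x i : ℕ) - (y i : ℕ) + ((y i : ℕ) - (x i : ℕ)))
              + ∑ j ∈ Finset.univ.erase i, ((x j : ℕ) - (y j : ℕ) + ((y j : ℕ) - (x j : ℕ))) :=
          (Finset.add_sum_erase _ _ (Finset.mem_univ i)).symm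
        have hx2 : ∑ j, ((x' j : ℕ) - (y j : ℕ) + ((y j : ℕ) - (x' j : ℕ)))
            = ((x' i : ℕ) - (y i : ℕ) + ((y i : ℕ) - (x' i : ℕ)))
              + ∑ j ∈ Finset.univ.erase i, ((x' j : ℕ) - (y j : ℕ) + ((y j : ℕ) - (x' j : ℕ))) :=
          (Finset.add_sum_erase _ _ (Finset.mem_univ i)).symm
        have heq : ∑ j ∈ Finset.univ.erase i, ((x' j : ℕ) - (y j : ℕ) + ((y j : ℕ) - (x' j : ℕ)))
            = ∑ j ∈ Finset.univ.erase i, ((x j : ℕ) - (y j : ℕ) + ((y j : ℕ) - (x j : ℕ))) :=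
          Finset.sum_congr rfl fun j hjm => by rw [hx'j j (Finset.ne_of_mem_erase hjm)]
        rw [hx2, heq]
        rw [hx] at h
        omega
      have hfd : fd α β x y = β + fd α β x' y := by
        rw [fd_eq_sum, fd_eq_sum]
        rw [← Finset.add_sum_erase _ _ (Finset.mem_univ i),
            ← Finset.add_sum_erase _ _ (Finset.mem_univ i)]
        have heq : ∑ j ∈ Finset.univ.erase i, phiF α β (((x' j : ℕ) : ℝ) - ((y j : ℕ) : ℝ))
            = ∑ j ∈ Finset.univ.erase i, phiF α β (((x j : ℕ) : ℝ) - ((y j : ℕ) : ℝ)) :=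
          Finset.sum_congr rfl fun j hjm => by rw [hx'j j (Finset.ne_of_mem_erase hjm)]
        rw [heq]
        have hxr : ((x' i : ℕ) : ℝ) = ((x i : ℕ) : ℝ) - 1 := by
          rw [hx'i]; push_cast [h1]; ring
        have hyr : ((y i : ℕ) : ℝ) ≤ ((x i : ℕ) : ℝ) - 1 := by
          have : (y i : ℕ) ≤ (x i : ℕ) - 1 := by omega
          calc ((y i : ℕ) : ℝ) ≤ (((x i : ℕ) - 1 : ℕ) : ℝ) := by exact_mod_cast this
            _ = ((x i : ℕ) : ℝ) - 1 := by push_cast [h1]; ring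
        unfold phiF
        rw [hxr, if_pos (by linarith), if_pos (by linarith)]
        ring
      have := ih x' y hsum'
      linarith [hlip.2]
    · -- x i < y i : step down y
      have hlt : (x i : ℕ) < (y i : ℕ) := by omega
      have h1 : 1 ≤ (y i : ℕ) := by omega
      set y' : Fin n → Fin k := Function.update y i
        ⟨(y i : ℕ) - 1, lt_of_le_of_lt (Nat.sub_le _ _) (y i).isLt⟩ with hy'
      have hy'i : (y' i : ℕ) = (y i : ℕ) - 1 := by simp [hy']
      have hy'j : ∀ j, j ≠ i → y' j = y j := fun j hjne => by
        simp [hy', Function.update_of_ne hjne]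
      have hstep : ∃ l, (y l : ℕ) = (y' l : ℕ) + 1 ∧ ∀ j, j ≠ l → y j = y' j :=
        ⟨i, by omega, fun j hjne => (hy'j j hjne).symm⟩
      have hlip := hg y' y hstep
      have hsum' : (∑ j, ((x j : ℕ) - (y' j : ℕ) + ((y' j : ℕ) - (x j : ℕ)))) ≤ N := by
        have hx : ∑ j, ((x j : ℕ) - (y j : ℕ) + ((y j : ℕ) - (x j : ℕ)))
            = ((x i : ℕ) - (y i : ℕ) + ((y i : ℕ) - (x i : ℕ)))
              + ∑ j ∈ Finset.univ.erase i, ((x j : ℕ) - (y j : ℕ) + ((y j : ℕ) - (x j : ℕ))) :=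
          (Finset.add_sum_erase _ _ (Finset.mem_univ i)).symm
        have hx2 : ∑ j, ((x j : ℕ) - (y' j : ℕ) + ((y' j : ℕ) - (x j : ℕ)))
            = ((x i : ℕ) - (y' i : ℕ) + ((y' i : ℕ) - (x i : ℕ)))
              + ∑ j ∈ Finset.univ.erase i, ((x j : ℕ) - (y' j : ℕ) + ((y' j : ℕ) - (x j : ℕ))) :=
          (Finset.add_sum_erase _ _ (Finset.mem_univ i)).symm
        have heq : ∑ j ∈ Finset.univ.erase i, ((x j : ℕ) - (y' j : ℕ) + ((y' j : ℕ) - (x j : ℕ)))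
            = ∑ j ∈ Finset.univ.erase i, ((x j : ℕ) - (y j : ℕ) + ((y j : ℕ) - (x j : ℕ))) :=
          Finset.sum_congr rfl fun j hjm => by rw [hy'j j (Finset.ne_of_mem_erase hjm)]
        rw [hx2, heq]
        rw [hx] at h
        omega
      have hfd : fd α β x y = fd α β x y' - α := by
        rw [fd_eq_sum, fd_eq_sum]
        rw [← Finset.add_sum_erase _ _ (Finset.mem_univ i),
            ← Finset.add_sum_erase _ _ (Finset.mem_univ i)]
        have heq : ∑ j ∈ Finset.univ.erase i, phiF α β (((x j : ℕ) : ℝ) - ((y' j : ℕ) : ℝ))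
            = ∑ j ∈ Finset.univ.erase i, phiF α β (((x j : ℕ) : ℝ) - ((y j : ℕ) : ℝ)) :=
          Finset.sum_congr rfl fun j hjm => by rw [hy'j j (Finset.ne_of_mem_erase hjm)]
        rw [heq]
        have hyr : ((y' i : ℕ) : ℝ) = ((y i : ℕ) : ℝ) - 1 := by
          rw [hy'i]; push_cast [h1]; ring
        have hxr : ((x i : ℕ) : ℝ) ≤ ((y i : ℕ) : ℝ) - 1 := by
          have : (x i : ℕ) ≤ (y i : ℕ) - 1 := by omega
          calc ((x i : ℕ) : ℝ) ≤ (((y i : ℕ) - 1 : ℕ) : ℝ) := by exact_mod_cast this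
            _ = ((y i : ℕ) : ℝ) - 1 := by push_cast [h1]; ring
        unfold phiF
        rw [hyr]
        by_cases hc : (0:ℝ) ≤ ((x i : ℕ) : ℝ) - (((y i : ℕ) : ℝ) - 1)
        · have hx0 : ((x i : ℕ) : ℝ) = ((y i : ℕ) : ℝ) - 1 := le_antisymm hxr (by linarith)
          rw [if_pos hc, if_neg (by rw [hx0]; norm_num)]
          rw [hx0]; ring
        · rw [if_neg hc, if_neg (by push_neg at hc ⊢; linarith)]
          ring
      have := ih x y' hsum'
      linarith [hlip.1]
lemma extension {n k : ℕ} {α β : ℝ} (hαβ : α < β) (f : (Fin n → Fin k) → ℝ)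
    (A : Set (Fin n → Fin k))
    (hA : ∀ x ∈ A, ∀ y ∈ A, f x - f y ≤ fd α β x y) :
    ∃ g, IsABLip α β g ∧ ∀ x ∈ A, g x = f x := by
  classical
  rcases A.eq_empty_or_nonempty with hAe | hAne
  · exact ⟨_, base_lip hαβ.le, by simp [hAe]⟩
  have hTne : A.toFinset.Nonempty := Set.toFinset_nonempty.mpr hAne
  set g : (Fin n → Fin k) → ℝ :=
    fun x => A.toFinset.inf' hTne (fun z => f z + fd α β x z) with hg
  have hglob : ∀ x y, g x - g y ≤ fd α β x y := by
    intro x y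
    obtain ⟨z, hz, hzeq⟩ := Finset.exists_mem_eq_inf' hTne (fun z => f z + fd α β y z)
    have h1 : g x ≤ f z + fd α β x z :=
      Finset.inf'_le _ hz
    have h2 : fd α β x z ≤ fd α β x y + fd α β y z := fd_triangle α β hαβ.le x y z
    have h3 : g y = f z + fd α β y z := hzeq
    linarith
  refine ⟨g, ?_, ?_⟩
  · intro x y hstep
    obtain ⟨h1, h2⟩ := fd_step α β hstep
    have ha := hglob x y
    have hb := hglob y x
    rw [h1] at ha; rw [h2] at hb
    constructor <;> linarith
  · intro x hx
    have hmem : x ∈ A.toFinset := Set.mem_toFinset.mpr hx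
    refine le_antisymm ?_ ?_
    · have h0 : g x ≤ f x + fd α β x x := Finset.inf'_le _ hmem
      rw [fd_self] at h0
      linarith
    · refine Finset.le_inf' _ _ fun z hz => ?_
      have hzA : z ∈ A := Set.mem_toFinset.mp hz
      have := hA x hx z hzA
      linarith

lemma dist_mono {n k : ℕ} {α β : ℝ} (hαβ : α < β)
    (f₁ f₂ : (Fin n → Fin k) → ℝ)
    (h : ∀ x y, f₂ x - f₂ y ≤ fd α β x y → f₁ x - f₁ y ≤ fd α β x y) :
    sInf {m : ℕ | ∃ g : (Fin n → Fin k) → ℝ, IsABLip α β g ∧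
        Nat.card {x : Fin n → Fin k // f₁ x ≠ g x} = m} ≤
    sInf {m : ℕ | ∃ g : (Fin n → Fin k) → ℝ, IsABLip α β g ∧
        Nat.card {x : Fin n → Fin k // f₂ x ≠ g x} = m} := by
  classical
  have hne₂ : {m : ℕ | ∃ g : (Fin n → Fin k) → ℝ, IsABLip α β g ∧
      Nat.card {x : Fin n → Fin k // f₂ x ≠ g x} = m}.Nonempty :=
    ⟨_, _, base_lip hαβ.le, rfl⟩
  obtain ⟨g₂, hg₂, hm⟩ := Nat.sInf_mem hne₂
  set A : Set (Fin n → Fin k) := {x | f₂ x = g₂ x} with hA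
  have hcons : ∀ x ∈ A, ∀ y ∈ A, f₁ x - f₁ y ≤ fd α β x y := by
    intro x hx y hy
    refine h x y ?_
    have hgx : f₂ x = g₂ x := hx
    have hgy : f₂ y = g₂ y := hy
    rw [hgx, hgy]
    exact lip_global hg₂ x y
  obtain ⟨g₁, hg₁, hagree⟩ := extension hαβ f₁ A hcons
  have hsub : {x | f₁ x ≠ g₁ x} ⊆ {x | f₂ x ≠ g₂ x} := by
    intro x hx
    by_contra hc
    simp only [Set.mem_setOf_eq, not_not] at hc
    exact hx (by rw [hagree x hc])
  have hcard : Nat.card {x : Fin n → Fin k // f₁ x ≠ g₁ x} ≤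
      Nat.card {x : Fin n → Fin k // f₂ x ≠ g₂ x} := by
    have e1 : Nat.card {x : Fin n → Fin k // f₁ x ≠ g₁ x} =
        Set.ncard {x : Fin n → Fin k | f₁ x ≠ g₁ x} := Nat.card_coe_set_eq _
    have e2 : Nat.card {x : Fin n → Fin k // f₂ x ≠ g₂ x} =
        Set.ncard {x : Fin n → Fin k | f₂ x ≠ g₂ x} := Nat.card_coe_set_eq _
    rw [e1, e2]
    exact Set.ncard_le_ncard hsub (Set.toFinite _)
  have hmem₁ : Nat.card {x : Fin n → Fin k // f₁ x ≠ g₁ x} ∈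
      {m : ℕ | ∃ g : (Fin n → Fin k) → ℝ, IsABLip α β g ∧
        Nat.card {x : Fin n → Fin k // f₁ x ≠ g x} = m} := ⟨g₁, hg₁, rfl⟩
  exact le_trans (Nat.sInf_le hmem₁) (hcard.trans_eq hm)
noncomputable def vw {n k : ℕ} (α β : ℝ) (g : (Fin n → Fin k) → ℝ)
    (x y : Fin n → Fin k) : ℝ :=
  max (g x - g y - fd α β x y) (g y - g x - fd α β y x)

/-- Perturbation: there is `f'` with the same violated pairs, the same
distance to the `(α,β)`-Lipschitz property, and no pair of weight exactly 0. -/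
theorem perturbation {n k : ℕ} (α β : ℝ) (hαβ : α < β)
    (f : (Fin n → Fin k) → ℝ) :
    ∃ f' : (Fin n → Fin k) → ℝ,
      (∀ x y, x ≠ y → (0 < vw α β f x y ↔ 0 < vw α β f' x y)) ∧
      sInf {m : ℕ | ∃ g : (Fin n → Fin k) → ℝ, IsABLip α β g ∧
          Nat.card {x : Fin n → Fin k // f x ≠ g x} = m} =
      sInf {m : ℕ | ∃ g : (Fin n → Fin k) → ℝ, IsABLip α β g ∧
          Nat.card {x : Fin n → Fin k // f' x ≠ g x} = m} ∧
      (∀ x y, x ≠ y → vw α β f' x y ≠ 0) := by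
  classical
  set c : (Fin n → Fin k) → ℕ := fun y =>
    (Finset.univ.filter (fun z => z ≠ y ∧ fd α β z y ≤ f z - f y)).card with hc
  have c_lt : ∀ x y, x ≠ y → fd α β x y ≤ f x - f y → c x < c y := by
    intro x y hxy hle
    apply Finset.card_lt_card
    constructor
    · intro z hz
      simp only [Finset.mem_filter, Finset.mem_univ, true_and] at hz ⊢
      obtain ⟨hzx, hzle⟩ := hz
      refine ⟨?_, ?_⟩
      · rintro rfl
        have := fd_add_pos hαβ hxy
        linarith
      · calc fd α β z y ≤ fd α β z x + fd α β x y := fd_triangle α β hαβ.le z x y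
          _ ≤ (f z - f x) + (f x - f y) := add_le_add hzle hle
          _ = f z - f y := by ring
    · intro hsub
      have hx : x ∈ Finset.univ.filter (fun z => z ≠ y ∧ fd α β z y ≤ f z - f y) := by
        simp only [Finset.mem_filter, Finset.mem_univ, true_and]
        exact ⟨hxy, hle⟩
      have := hsub hx
      simp only [Finset.mem_filter, Finset.mem_univ, true_and] at this
      exact this.1 rfl
  set K : ℝ := (Fintype.card (Fin n → Fin k) : ℝ) with hK
  have hK0 : (0:ℝ) ≤ K := Nat.cast_nonneg _
  have cK : ∀ x, (c x : ℝ) ≤ K := by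
    intro x
    have h1 : c x ≤ Fintype.card (Fin n → Fin k) := by
      rw [hc]
      simpa using (Finset.card_filter_le Finset.univ
        (fun z => z ≠ x ∧ fd α β z x ≤ f z - f x)).trans (le_of_eq (Finset.card_univ))
    rw [hK]; exact_mod_cast h1
  obtain ⟨ε, hε, hεs⟩ : ∃ ε : ℝ, 0 < ε ∧ ∀ x y, f x - f y - fd α β x y ≠ 0 →
      ε * (K + 1) < |f x - f y - fd α β x y| := by
    set T : Finset ℝ := Finset.image (fun p : (Fin n → Fin k) × (Fin n → Fin k) =>
        |f p.1 - f p.2 - fd α β p.1 p.2|)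
      ((Finset.univ ×ˢ Finset.univ).filter
        (fun p => f p.1 - f p.2 - fd α β p.1 p.2 ≠ 0)) with hT
    have hTpos : ∀ t ∈ T, 0 < t := by
      intro t ht
      rw [hT] at ht
      simp only [Finset.mem_image, Finset.mem_filter] at ht
      obtain ⟨p, ⟨_, hp⟩, hpe⟩ := ht
      rw [← hpe]; exact abs_pos.mpr hp
    by_cases hTne : T.Nonempty
    · have hmpos : 0 < T.min' hTne := hTpos _ (T.min'_mem hTne)
      refine ⟨T.min' hTne / (2 * (K + 1)), div_pos hmpos (by linarith), ?_⟩
      intro x y ha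
      have hmemT : |f x - f y - fd α β x y| ∈ T := by
        rw [hT]
        have hpm : (x, y) ∈ (Finset.univ ×ˢ Finset.univ).filter
            (fun p : (Fin n → Fin k) × (Fin n → Fin k) =>
              f p.1 - f p.2 - fd α β p.1 p.2 ≠ 0) := by
          simp only [Finset.mem_filter]
          exact ⟨by simp, ha⟩
        exact Finset.mem_image_of_mem _ hpm
      have h1 := T.min'_le _ hmemT
      have heq : T.min' hTne / (2 * (K + 1)) * (K + 1) = T.min' hTne / 2 := by
        field_simp
      rw [heq]
      linarith [half_lt_self hmpos]
    · refine ⟨1, one_pos, fun x y ha => absurd ?_ hTne⟩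
      have hpm : (x, y) ∈ (Finset.univ ×ˢ Finset.univ).filter
          (fun p : (Fin n → Fin k) × (Fin n → Fin k) =>
            f p.1 - f p.2 - fd α β p.1 p.2 ≠ 0) := by
        simp only [Finset.mem_filter]
        exact ⟨by simp, ha⟩
      exact ⟨_, Finset.mem_image_of_mem _ hpm⟩
  set f' : (Fin n → Fin k) → ℝ := fun x => f x + ε * (c x : ℝ) with hf'
  have key : ∀ x y, x ≠ y →
      (f x - f y - fd α β x y ≤ 0 → f' x - f' y - fd α β x y < 0) ∧
      (0 < f x - f y - fd α β x y → 0 < f' x - f' y - fd α β x y) := by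
    intro x y hxy
    have hΔ1 : (c x : ℝ) - (c y : ℝ) ≤ K := by
      have := cK x; have : (0:ℝ) ≤ (c y : ℝ) := Nat.cast_nonneg _
      linarith [cK x]
    have hΔ2 : -K ≤ (c x : ℝ) - (c y : ℝ) := by
      have := cK y; have : (0:ℝ) ≤ (c x : ℝ) := Nat.cast_nonneg _
      linarith [cK y]
    have heq : f' x - f' y - fd α β x y =
        (f x - f y - fd α β x y) + ε * ((c x : ℝ) - (c y : ℝ)) := by
      simp only [hf']; ring
    have hm1 : ε * ((c x : ℝ) - (c y : ℝ)) ≤ ε * K :=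
      mul_le_mul_of_nonneg_left hΔ1 hε.le
    have hm2 : ε * (-K) ≤ ε * ((c x : ℝ) - (c y : ℝ)) :=
      mul_le_mul_of_nonneg_left hΔ2 hε.le
    have hrK : ε * (K + 1) = ε * K + ε := by ring
    have hrK2 : ε * (-K) = -(ε * K) := by ring
    constructor
    · intro hle
      rcases hle.lt_or_eq with hneg | h0
      · have habs := hεs x y (ne_of_lt hneg)
        rw [abs_of_neg hneg] at habs
        rw [heq]; linarith
      · have hfd : fd α β x y ≤ f x - f y := le_of_eq (by linarith)
        have hclt := c_lt x y hxy hfd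
        have hcr : (c x : ℝ) < (c y : ℝ) := by exact_mod_cast hclt
        have : ε * ((c x : ℝ) - (c y : ℝ)) < 0 :=
          mul_neg_of_pos_of_neg hε (by linarith)
        rw [heq, ← h0]; linarith
    · intro hpos
      have habs := hεs x y (ne_of_gt hpos)
      rw [abs_of_pos hpos] at habs
      rw [heq]; linarith
  refine ⟨f', ?_, ?_, ?_⟩
  · intro x y hxy
    have k1 := key x y hxy
    have k2 := key y x hxy.symm
    simp only [vw, lt_max_iff]
    constructor
    · rintro (h | h)
      · exact Or.inl (k1.2 h)
      · exact Or.inr (k2.2 h)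
    · rintro (h | h)
      · left
        by_contra hcon; push_neg at hcon
        exact absurd h (not_lt.mpr (k1.1 hcon).le)
      · right
        by_contra hcon; push_neg at hcon
        exact absurd h (not_lt.mpr (k2.1 hcon).le)
  · apply le_antisymm
    · refine dist_mono hαβ f f' ?_
      intro x y hle
      by_cases hxy : x = y
      · subst hxy; rw [fd_self]; simp
      by_contra hcon; push_neg at hcon
      have := (key x y hxy).2 (by linarith)
      linarith
    · refine dist_mono hαβ f' f ?_
      intro x y hle
      by_cases hxy : x = y
      · subst hxy; rw [fd_self]; simp
      exact le_of_lt (by linarith [(key x y hxy).1 (by linarith)])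
  · intro x y hxy
    have k1 := key x y hxy
    have k2 := key y x hxy.symm
    simp only [vw]
    rcases le_or_gt (f x - f y - fd α β x y) 0 with h1 | h1
    · rcases le_or_gt (f y - f x - fd α β y x) 0 with h2 | h2
      · exact ne_of_lt (max_lt (k1.1 h1) (k2.1 h2))
      · exact (lt_max_iff.mpr (Or.inr (k2.2 h2))).ne'
    · exact (lt_max_iff.mpr (Or.inl (k1.2 h1))).ne'
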